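/- (Torsor property of quasi-BV structures, translation) Let G be a Gerstenhaber algebra, Δ a quasi-BV structure on G, and ω : G → G a k-linear map homogeneous of degree −1 satisfying ω(xy) = ω(x)y + (−1)^{|x|} x ω(y) and ω([x,y]) = [ω(x), y] + (−1)^{|x|−1}[x, ω(y)] for all homogeneous x, y. Then Δ + ω is again a quasi-BV structure on G. -/

import Mathlib

/-- A Gerstenhaber bracket on a ℤ-graded (graded-commutative) associative unital
`k`-algebra `A` with grading `𝒜`: a `k`-bilinear bracket of degree `-1` satisfying
graded antisymmetry (G1), the graded Jacobi identity (G2) and the graded Leibniz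
(odd Poisson) rule (G3); graded commutativity of the product is also recorded. -/
structure GerstenhaberBracket (k A : Type) [Field k] [CharZero k] [Ring A] [Algebra k A]
    (𝒜 : ℤ → Submodule k A) [GradedAlgebra 𝒜] where
  br : A →ₗ[k] A →ₗ[k] A
  br_mem : ∀ {i j : ℤ} {x y : A}, x ∈ 𝒜 i → y ∈ 𝒜 j → br x y ∈ 𝒜 (i + j - 1)
  gcomm : ∀ {i j : ℤ} {x y : A}, x ∈ 𝒜 i → y ∈ 𝒜 j →
    x * y = ((-1 : k) ^ (i * j)) • (y * x)
  g1 : ∀ {i j : ℤ} {x y : A}, x ∈ 𝒜 i → y ∈ 𝒜 j →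
    br x y = -(((-1 : k) ^ ((i - 1) * (j - 1))) • br y x)
  g2 : ∀ {i j l : ℤ} {x y z : A}, x ∈ 𝒜 i → y ∈ 𝒜 j → z ∈ 𝒜 l →
    br x (br y z) = br (br x y) z + ((-1 : k) ^ ((i - 1) * (j - 1))) • br y (br x z)
  g3 : ∀ {i j l : ℤ} {x y z : A}, x ∈ 𝒜 i → y ∈ 𝒜 j → z ∈ 𝒜 l →
    br x (y * z) = br x y * z + ((-1 : k) ^ (j * (i - 1))) • (y * br x z)

/-- torsor property, translation: if `Δ` is a quasi-BV structure and
`ω` is a closed 1-form (a degree `−1` linear map which is a derivation of both the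
product and the bracket), then `Δ + ω` is again a quasi-BV structure. -/
theorem qBV_translate_by_closed_one_form
    (k A : Type) [Field k] [CharZero k] [Ring A] [Algebra k A]
    (𝒜 : ℤ → Submodule k A) [GradedAlgebra 𝒜]
    (G : GerstenhaberBracket k A 𝒜)
    (Δ ω : A →ₗ[k] A)
    (hdeg : ∀ (i : ℤ) (x : A), x ∈ 𝒜 i → Δ x ∈ 𝒜 (i - 1))
    (hBV1 : ∀ (i j : ℤ) (x y : A), x ∈ 𝒜 i → y ∈ 𝒜 j →
      Δ (x * y) - Δ x * y - ((-1 : k) ^ i) • (x * Δ y) = ((-1 : k) ^ i) • G.br x y)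
    (hqBV2 : ∀ (i j : ℤ) (x y : A), x ∈ 𝒜 i → y ∈ 𝒜 j →
      Δ (Δ (x * y)) = Δ (Δ x) * y + x * Δ (Δ y))
    (hωdeg : ∀ (i : ℤ) (x : A), x ∈ 𝒜 i → ω x ∈ 𝒜 (i - 1))
    (hωmul : ∀ (i j : ℤ) (x y : A), x ∈ 𝒜 i → y ∈ 𝒜 j →
      ω (x * y) = ω x * y + ((-1 : k) ^ i) • (x * ω y))
    (hωbr : ∀ (i j : ℤ) (x y : A), x ∈ 𝒜 i → y ∈ 𝒜 j →
      ω (G.br x y) = G.br (ω x) y + ((-1 : k) ^ (i - 1)) • G.br x (ω y)) :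
    (∀ (i : ℤ) (x : A), x ∈ 𝒜 i → (Δ + ω) x ∈ 𝒜 (i - 1)) ∧
    (∀ (i j : ℤ) (x y : A), x ∈ 𝒜 i → y ∈ 𝒜 j →
      (Δ + ω) (x * y) - (Δ + ω) x * y - ((-1 : k) ^ i) • (x * (Δ + ω) y)
        = ((-1 : k) ^ i) • G.br x y) ∧
    (∀ (i j : ℤ) (x y : A), x ∈ 𝒜 i → y ∈ 𝒜 j →
      (Δ + ω) ((Δ + ω) (x * y))
        = (Δ + ω) ((Δ + ω) x) * y + x * (Δ + ω) ((Δ + ω) y)) := by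
  have hss : ∀ i : ℤ, ((-1 : k) ^ i) * ((-1 : k) ^ i) = 1 := by
    intro i; rw [← mul_zpow]; norm_num
  have hs : ∀ i : ℤ, ((-1 : k) ^ (i - 1)) = -((-1 : k) ^ i) := by
    intro i
    rw [zpow_sub₀ (by norm_num : (-1 : k) ≠ 0)]
    field_simp
  refine ⟨?_, ?_, ?_⟩
  · intro i x hx
    exact Submodule.add_mem _ (hdeg i x hx) (hωdeg i x hx)
  · intro i j x y hx hy
    have h := hBV1 i j x y hx hy
    have h2 := hωmul i j x y hx hy
    rw [sub_sub, sub_eq_iff_eq_add] at h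
    simp only [LinearMap.add_apply]
    rw [h, h2]
    simp only [add_mul, mul_add, smul_add]
    module
  · intro i j x y hx hy
    set s : k := (-1 : k) ^ i with hsdef
    have hs2 : s * s = 1 := hss i
    -- expansions of Δ on products
    have hB1' : Δ (ω x * y) = Δ (ω x) * y - s • (ω x * Δ y) - s • G.br (ω x) y := by
      have h := hBV1 (i - 1) j (ω x) y (hωdeg i x hx) hy
      rw [hs i] at h
      rw [sub_sub, sub_eq_iff_eq_add] at h
      rw [h]; module
    have hB2' : Δ (x * ω y) = Δ x * ω y + s • (x * Δ (ω y)) + s • G.br x (ω y) := by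
      have h := hBV1 i (j - 1) x (ω y) hx (hωdeg j y hy)
      rw [sub_sub, sub_eq_iff_eq_add] at h
      rw [h]; module
    have hΔ' : Δ (x * y) = Δ x * y + s • (x * Δ y) + s • G.br x y := by
      have h := hBV1 i j x y hx hy
      rw [sub_sub, sub_eq_iff_eq_add] at h
      rw [h]; module
    -- expansions of ω on products
    have hωm1 : ω (Δ x * y) = ω (Δ x) * y - s • (Δ x * ω y) := by
      have h := hωmul (i - 1) j (Δ x) y (hdeg i x hx) hy
      rw [hs i] at h; rw [h]; module
    have hωm2 : ω (x * Δ y) = ω x * Δ y + s • (x * ω (Δ y)) :=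
      hωmul i (j - 1) x (Δ y) hx (hdeg j y hy)
    have hωm3 : ω (x * y) = ω x * y + s • (x * ω y) := hωmul i j x y hx hy
    have hωm4 : ω (ω x * y) = ω (ω x) * y - s • (ω x * ω y) := by
      have h := hωmul (i - 1) j (ω x) y (hωdeg i x hx) hy
      rw [hs i] at h; rw [h]; module
    have hωm5 : ω (x * ω y) = ω x * ω y + s • (x * ω (ω y)) :=
      hωmul i (j - 1) x (ω y) hx (hωdeg j y hy)
    have hωbr' : ω (G.br x y) = G.br (ω x) y - s • G.br x (ω y) := by
      have h := hωbr i j x y hx hy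
      rw [hs i] at h; rw [h]; module
    have hq := hqBV2 i j x y hx hy
    -- the three key expansions
    have e1 : Δ (ω (x * y)) =
        Δ (ω x) * y - s • (ω x * Δ y) - s • G.br (ω x) y
          + s • (Δ x * ω y) + (x * Δ (ω y)) + G.br x (ω y) := by
      rw [hωm3, map_add, map_smul, hB1', hB2']
      simp only [smul_add, smul_sub, smul_smul, hss, hs2, one_smul]
      module
    have e2 : ω (Δ (x * y)) =
        ω (Δ x) * y - s • (Δ x * ω y) + s • (ω x * Δ y) + (x * ω (Δ y))
          + s • G.br (ω x) y - G.br x (ω y) := by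
      rw [hΔ', map_add, map_add, map_smul, map_smul, hωm1, hωm2, hωbr']
      simp only [smul_add, smul_sub, smul_smul, hss, hs2, one_smul]
      module
    have e3 : ω (ω (x * y)) = ω (ω x) * y + (x * ω (ω y)) := by
      rw [hωm3, map_add, map_smul, hωm4, hωm5]
      simp only [smul_add, smul_sub, smul_smul, hss, hs2, one_smul]
      module
    simp only [LinearMap.add_apply, map_add]
    rw [hq, e1, e2, e3]
    simp only [add_mul, mul_add]
    module
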